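/- Proposition (PBAcc equivalence (OP₀) = (OP₁), Eq. (32)): Let n ≥ 1, let y : Fin n → ℝ take values in {0,1}, let c : Fin n → ℝ, set ỹ = y ⊙ c (entrywise product), and suppose S⁻ := Σ_i (1 − y_i) > 0. Define the symmetric adjacency matrix A = (1/S⁻)·( ỹ·(𝟙−y)ᵀ + (𝟙−y)·ỹᵀ ) ∈ ℝ^{n×n} (𝟙 the all-ones vector) and the Laplacian P = diag(A·𝟙) − A. Then for every f : Fin n → ℝ, writing Q = f − y, the Laplacian quadratic form satisfies Qᵀ P Q = Σ_{p=1}^{n} Σ_{q=1}^{n} y_p·(1−y_q)·(c_p/S⁻) · ( 1 − (f_p − f_q) )². In particular, choosing c_p = 1/S_k⁺ for salient pixels p of foreground region k, the right-hand side is the size-invariant square-surrogate AUC loss Σ_k Σ_{p∈X_k⁺} Σ_{q∈X⁻} ℓ_sq(f_p − f_q)/(S_k⁺·S⁻) with ℓ_sq(z) = (1−z)². -/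

import Mathlib

/-- Proposition (PBAcc equivalence (OP₀) = (OP₁), Eq. (32)): the Laplacian quadratic form
`Qᵀ P Q` equals the size-invariant square-surrogate AUC loss. -/
theorem pbacc_quadratic_form_eq_si_auc_loss (n : ℕ) (hn : 1 ≤ n)
    (y c : Fin n → ℝ) (hy : ∀ i, y i = 0 ∨ y i = 1)
    (Sneg : ℝ) (hSneg : Sneg = ∑ i, (1 - y i)) (hSpos : 0 < Sneg)
    (ytil : Fin n → ℝ) (hytil : ytil = fun i => y i * c i)
    (A : Matrix (Fin n) (Fin n) ℝ)
    (hA : A = (1 / Sneg) • (Matrix.vecMulVec ytil (fun j => 1 - y j)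
      + Matrix.vecMulVec (fun i => 1 - y i) ytil))
    (P : Matrix (Fin n) (Fin n) ℝ)
    (hP : P = Matrix.diagonal (Matrix.mulVec A (fun _ => 1)) - A)
    (f : Fin n → ℝ) (Q : Fin n → ℝ) (hQ : Q = fun i => f i - y i) :
    dotProduct Q (Matrix.mulVec P Q) =
      ∑ p, ∑ q, y p * (1 - y q) * (c p / Sneg) * (1 - (f p - f q)) ^ 2 := by
  subst hytil hQ hP
  have hApq : ∀ p q, A p q
      = (1/Sneg) * ((y p * c p) * (1 - y q)) + (1/Sneg) * ((1 - y p) * (y q * c q)) := by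
    intro p q
    rw [hA]
    simp [Matrix.vecMulVec_apply]
    ring
  have hLHS : dotProduct (fun i => f i - y i)
      (Matrix.mulVec (Matrix.diagonal (A.mulVec fun _ => 1) - A) (fun i => f i - y i))
      = ∑ p, ∑ q, A p q * ((f p - y p) * ((f p - y p) - (f q - y q))) := by
    refine Finset.sum_congr rfl fun p _ => ?_
    simp only [Matrix.sub_apply, Matrix.diagonal_apply, Matrix.mulVec, dotProduct,
      mul_one, sub_mul, ite_mul, zero_mul, Finset.sum_sub_distrib, Finset.sum_ite_eq,
      Finset.mem_univ, if_true]
    rw [Finset.sum_mul, mul_sub, mul_sub, Finset.mul_sum, Finset.mul_sum, Finset.mul_sum,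
      Finset.mul_sum, ← Finset.sum_sub_distrib, ← Finset.sum_sub_distrib,
      ← Finset.sum_sub_distrib]
    exact Finset.sum_congr rfl fun q _ => by ring
  rw [hLHS]
  have hsplit : ∀ p q, A p q * ((f p - y p) * ((f p - y p) - (f q - y q)))
      = (1/Sneg) * ((y p * c p) * (1 - y q)) * ((f p - y p) * ((f p - y p) - (f q - y q)))
        + (1/Sneg) * ((1 - y p) * (y q * c q)) * ((f p - y p) * ((f p - y p) - (f q - y q))) := by
    intro p q; rw [hApq]; ring
  simp only [hsplit, Finset.sum_add_distrib]
  rw [Finset.sum_comm (f := fun p q =>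
    (1/Sneg) * ((1 - y p) * (y q * c q)) * ((f p - y p) * ((f p - y p) - (f q - y q))))]
  rw [← Finset.sum_add_distrib]
  refine Finset.sum_congr rfl fun p _ => ?_
  rw [← Finset.sum_add_distrib]
  refine Finset.sum_congr rfl fun q _ => ?_
  rcases hy p with hp | hp <;> rcases hy q with hq | hq <;> rw [hp, hq] <;> ring
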